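/- Let F be a field of characteristic 2, let m be a positive odd integer, let n > k ≥ 1, set r = n − k, and let f = Σ_{i=0}^{r} β_i X^i ∈ F[X] with β₀ ≠ 0 and β_r ≠ 0 be a divisor of Xⁿ − 1 of degree r. Let C be the cyclic code of length n generated by f, assume every nonzero codeword of C has Hamming weight at least d₁ and every nonzero codeword of the dual code of C has Hamming weight at least d₂, and set d = min(d₁, d₂). Fix t with 0 < t < r and define ĝ₁ = f − β_t X^t + X^t and ĝ₂ = f − β_t X^t in F[X]. Consider the (2m,1) convolutional code whose generator matrix is the row vector of length 2m whose entries in the m even-indexed positions all equal ĝ₁ and whose entries in the m odd-indexed positions all equal ĝ₂. Then its free distance is at least m·d + 2m; that is, for every nonzero polynomial u ∈ F[X], m·wt(u·ĝ₁) + m·wt(u·ĝ₂) ≥ m·d + 2m. -/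

import Mathlib

open Polynomial Classical

section Aux

variable {F : Type*} [Field F]

lemma fold_eq {n : ℕ} (hn : 0 < n) (q : Polynomial F) :
    q %ₘ (X ^ n - 1) = ∑ i ∈ q.support, C (q.coeff i) * X ^ (i % n) := by
  have hM : (X ^ n - 1 : F[X]).Monic := by
    simpa using monic_X_pow_sub_C (1 : F) hn.ne'
  have hdegM : (X ^ n - 1 : F[X]).degree = n := by
    simpa using degree_X_pow_sub_C hn (1 : F)
  set R := ∑ i ∈ q.support, C (q.coeff i) * X ^ (i % n) with hR
  have hdegR : R.degree < (n : ℕ) := by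
    apply lt_of_le_of_lt (degree_sum_le _ _)
    rw [Finset.sup_lt_iff (by exact_mod_cast WithBot.bot_lt_coe n)]
    intro i _
    exact lt_of_le_of_lt (degree_C_mul_X_pow_le _ _)
      (by exact_mod_cast Nat.mod_lt i hn)
  have hdvd : (X ^ n - 1 : F[X]) ∣ q - R := by
    conv_rhs => rw [q.as_sum_support]
    rw [hR, ← Finset.sum_sub_distrib]
    apply Finset.dvd_sum
    intro i _
    rw [← C_mul_X_pow_eq_monomial]
    have hx : (X : F[X]) ^ i = (X ^ n) ^ (i / n) * X ^ (i % n) := by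
      rw [← pow_mul, ← pow_add, Nat.div_add_mod]
    calc (X ^ n - 1 : F[X]) ∣ ((X ^ n) ^ (i / n) - 1) * (C (q.coeff i) * X ^ (i % n)) := by
          apply Dvd.dvd.mul_right
          simpa using sub_dvd_pow_sub_pow (X ^ n : F[X]) 1 (i / n)
      _ = C (q.coeff i) * X ^ i - C (q.coeff i) * X ^ (i % n) := by
          rw [hx]; ring
  have h1 : (X ^ n - 1 : F[X]) ∣ q %ₘ (X ^ n - 1) - R := by
    rw [modByMonic_eq_sub_mul_div q (X ^ n - 1)]
    have : q - (X ^ n - 1) * (q /ₘ (X ^ n - 1)) - R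
        = (q - R) - (X ^ n - 1) * (q /ₘ (X ^ n - 1)) := by ring
    rw [this]
    exact dvd_sub hdvd (dvd_mul_right _ _)
  have h2 : (q %ₘ (X ^ n - 1) - R).degree < (X ^ n - 1 : F[X]).degree := by
    apply lt_of_le_of_lt (degree_sub_le _ _)
    rw [hdegM]
    exact max_lt (hdegM ▸ degree_modByMonic_lt q hM) hdegR
  have := eq_zero_of_dvd_of_degree_lt h1 h2
  exact sub_eq_zero.mp this

lemma fold_coeff {n : ℕ} (hn : 0 < n) (q : Polynomial F) (j : ℕ) :
    (q %ₘ (X ^ n - 1)).coeff j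
      = ∑ i ∈ q.support.filter (fun i => i % n = j), q.coeff i := by
  rw [fold_eq hn, finset_sum_coeff, Finset.sum_filter]
  apply Finset.sum_congr rfl
  intro i _
  rw [coeff_C_mul, coeff_X_pow]
  by_cases h : i % n = j
  · simp [h]
  · simp [h, Ne.symm h]

lemma fold_supp_subset {n : ℕ} (hn : 0 < n) (q : Polynomial F) :
    (q %ₘ (X ^ n - 1)).support ⊆ q.support.image (· % n) := by
  intro j hj
  rw [mem_support_iff, fold_coeff hn] at hj
  obtain ⟨i, hi⟩ := Finset.exists_ne_zero_of_sum_ne_zero hj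
  rw [Finset.mem_filter] at hi
  exact Finset.mem_image.mpr ⟨i, hi.1.1, hi.1.2⟩

lemma fold_card_le {n : ℕ} (hn : 0 < n) (q : Polynomial F) :
    (q %ₘ (X ^ n - 1)).support.card ≤ q.support.card :=
  le_trans (Finset.card_le_card (fold_supp_subset hn q)) (Finset.card_image_le)

/-- class-chain lemma: if class `j` of `(X^n-1)*p` vanishes, class `j` of `p` vanishes. -/
lemma class_chain {n : ℕ} (hn : 0 < n) (p : Polynomial F) (j : ℕ)
    (h : ∀ i, i % n = j → ((X ^ n - 1 : F[X]) * p).coeff i = 0) :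
    ∀ i, i % n = j → p.coeff i = 0 := by
  intro i
  induction i using Nat.strong_induction_on with
  | _ i ih =>
    intro hij
    have hq := h i hij
    rw [sub_mul, one_mul, coeff_sub, X_pow_mul, coeff_mul_X_pow'] at hq
    by_cases hni : n ≤ i
    · have h1 : p.coeff (i - n) = 0 := by
        apply ih (i - n) (by omega)
        rw [← hij]
        conv_rhs => rw [show i = i - n + n by omega]
        rw [Nat.add_mod_right]
      rw [if_pos hni, h1] at hq
      simpa using hq
    · rw [if_neg hni] at hq
      simpa using hq

lemma class_chain_pow {n : ℕ} (hn : 0 < n) (s : ℕ) (p : Polynomial F) (j : ℕ)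
    (h : ∀ i, i % n = j → ((X ^ n - 1 : F[X]) ^ s * p).coeff i = 0) :
    ∀ i, i % n = j → p.coeff i = 0 := by
  induction s with
  | zero => simpa using h
  | succ s ih =>
    apply ih
    apply class_chain hn _ j
    intro i hij
    have := h i hij
    rwa [show (X ^ n - 1 : F[X]) ^ (s + 1) * p = (X ^ n - 1) * ((X ^ n - 1) ^ s * p) by ring]
      at this

/-- each nonzero residue class of a multiple of `X^n - 1` has at least 2 elements -/
lemma two_le_fiber {n : ℕ} (hn : 0 < n) (q : Polynomial F)
    (hq : (X ^ n - 1 : F[X]) ∣ q) (j : ℕ) (hj : j ∈ q.support.image (· % n)) :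
    2 ≤ (q.support.filter (fun i => i % n = j)).card := by
  have hM : (X ^ n - 1 : F[X]).Monic := by
    simpa using monic_X_pow_sub_C (1 : F) hn.ne'
  have hfold : q %ₘ (X ^ n - 1) = 0 := (modByMonic_eq_zero_iff_dvd hM).mpr hq
  have hsum : ∑ i ∈ q.support.filter (fun i => i % n = j), q.coeff i = 0 := by
    rw [← fold_coeff hn q j, hfold, coeff_zero]
  obtain ⟨i0, hi0⟩ := Finset.mem_image.mp hj
  have hne : (q.support.filter (fun i => i % n = j)).Nonempty :=
    ⟨i0, Finset.mem_filter.mpr ⟨hi0.1, hi0.2⟩⟩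
  by_contra hlt
  push_neg at hlt
  interval_cases h : (q.support.filter (fun i => i % n = j)).card
  · exact Finset.Nonempty.card_pos hne |>.ne' h
  · obtain ⟨a, ha⟩ := Finset.card_eq_one.mp h
    rw [ha, Finset.sum_singleton] at hsum
    have : a ∈ q.support := by
      have : a ∈ q.support.filter (fun i => i % n = j) := ha ▸ Finset.mem_singleton_self a
      exact (Finset.mem_filter.mp this).1
    exact (mem_support_iff.mp this) hsum

/-- key weight lemma: `wt((X^n-1)^s p) ≥ 2 wt(p mod (X^n-1))` for `s ≥ 1`. -/
lemma pow_mul_weight {n : ℕ} (hn : 0 < n) {s : ℕ} (hs : 1 ≤ s) (p : Polynomial F) :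
    2 * (p %ₘ (X ^ n - 1)).support.card
      ≤ ((X ^ n - 1 : F[X]) ^ s * p).support.card := by
  set q : F[X] := (X ^ n - 1) ^ s * p with hqdef
  have hdvd : (X ^ n - 1 : F[X]) ∣ q := by
    exact Dvd.dvd.mul_right (dvd_pow_self _ (by omega)) p
  -- supp (p %ₘ) ⊆ image of supp q
  have hsub : (p %ₘ (X ^ n - 1)).support ⊆ q.support.image (· % n) := by
    intro j hj
    by_contra hc
    have hz : ∀ i, i % n = j → q.coeff i = 0 := by
      intro i hij
      by_contra hnz
      exact hc (Finset.mem_image.mpr ⟨i, mem_support_iff.mpr hnz, hij⟩)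
    have := class_chain_pow hn s p j hz
    rw [mem_support_iff, fold_coeff hn p j] at hj
    apply hj
    apply Finset.sum_eq_zero
    intro i hi
    exact this i (Finset.mem_filter.mp hi).2
  calc 2 * (p %ₘ (X ^ n - 1)).support.card
      ≤ 2 * (q.support.image (· % n)).card := by
        exact Nat.mul_le_mul_left 2 (Finset.card_le_card hsub)
    _ = ∑ _j ∈ q.support.image (· % n), 2 := by rw [Finset.sum_const, smul_eq_mul, mul_comm]
    _ ≤ ∑ j ∈ q.support.image (· % n), (q.support.filter (fun i => i % n = j)).card :=
        Finset.sum_le_sum (fun j hj => two_le_fiber hn q hdvd j hj)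
    _ = q.support.card := (Finset.card_eq_sum_card_fiberwise (fun x hx =>
          Finset.mem_image_of_mem _ hx)).symm

lemma pair_bound (x y : Polynomial F) :
    (x + y).support.card + 2 * ((x.support ∩ y.support) \ (x + y).support).card
      ≤ x.support.card + y.support.card := by
  have h1 : (x.support ∪ y.support).card + (x.support ∩ y.support).card
      = x.support.card + y.support.card := Finset.card_union_add_card_inter _ _
  set D := (x.support ∩ y.support) \ (x + y).support with hD
  have hdisj : Disjoint (x + y).support D := by
    exact Finset.disjoint_sdiff
  have h2 : ((x + y).support ∪ D).card = (x + y).support.card + D.card :=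
    Finset.card_union_of_disjoint hdisj
  have h3 : (x + y).support ∪ D ⊆ x.support ∪ y.support := by
    apply Finset.union_subset (support_add)
    exact le_trans Finset.sdiff_subset Finset.inter_subset_union
  have h4 : D.card ≤ (x.support ∩ y.support).card :=
    Finset.card_le_card Finset.sdiff_subset
  have h5 := Finset.card_le_card h3
  omega

lemma dual_bound {n : ℕ} (hn2 : 2 ≤ n) (f : Polynomial F) (d₂ : ℕ)
    (hdual : ∀ v : Fin n → F, v ≠ 0 →
      (∀ u : Polynomial F, ∑ i : Fin n, v i * ((f * u) %ₘ (X ^ n - 1)).coeff i = 0) →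
      d₂ ≤ (Finset.univ.filter fun i => v i ≠ 0).card)
    (p : Polynomial F) (hp : (X ^ n - 1 : Polynomial F) ∣ f * p)
    (hnz : p %ₘ (X ^ n - 1) ≠ 0) :
    d₂ ≤ (p %ₘ (X ^ n - 1)).support.card := by
  have hn : 0 < n := by omega
  have hM : (X ^ n - 1 : F[X]).Monic := by
    simpa using monic_X_pow_sub_C (1 : F) hn.ne'
  have hdegM : (X ^ n - 1 : F[X]).degree = n := by
    simpa using degree_X_pow_sub_C hn (1 : F)
  set A := p %ₘ (X ^ n - 1) with hA
  have hAdeg : A.natDegree ≤ n - 1 := by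
    have := degree_modByMonic_lt p hM
    rw [hdegM] at this
    have := (natDegree_lt_iff_degree_lt hnz).mpr this
    omega
  have hsupA : ∀ j ∈ A.support, j ≤ n - 1 := fun j hj =>
    le_trans (le_natDegree_of_ne_zero (mem_support_iff.mp hj)) hAdeg
  set v : Fin n → F := fun i => A.coeff (n - 1 - (i : ℕ)) with hv
  have hvne : v ≠ 0 := by
    have hmem := natDegree_mem_support_of_nonzero hnz
    intro hc
    have := congrFun hc ⟨n - 1 - A.natDegree, by omega⟩
    simp only [hv, Pi.zero_apply] at this
    rw [show n - 1 - (n - 1 - A.natDegree) = A.natDegree by omega] at this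
    exact mem_support_iff.mp hmem this
  have horth : ∀ w : Polynomial F,
      ∑ i : Fin n, v i * ((f * w) %ₘ (X ^ n - 1)).coeff i = 0 := by
    intro w
    set B := (f * w) %ₘ (X ^ n - 1) with hB
    have hABdvd : (X ^ n - 1 : F[X]) ∣ A * B := by
      have e1 : A = p - (X ^ n - 1) * (p /ₘ (X ^ n - 1)) := modByMonic_eq_sub_mul_div p (X ^ n - 1)
      have e2 : B = f * w - (X ^ n - 1) * ((f * w) /ₘ (X ^ n - 1)) :=
        modByMonic_eq_sub_mul_div (f * w) (X ^ n - 1)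
      obtain ⟨c, hc⟩ := hp
      have : A * B = (X ^ n - 1) * (c * w
          - (p /ₘ (X ^ n - 1)) * (f * w) - p * ((f * w) /ₘ (X ^ n - 1))
          + (X ^ n - 1) * (p /ₘ (X ^ n - 1)) * ((f * w) /ₘ (X ^ n - 1))) := by
        rw [e1, e2]
        linear_combination w * hc
      exact ⟨_, this⟩
    have hcoeff : (A * B).coeff (n - 1) = 0 := by
      by_cases hAB : A * B = 0
      · rw [hAB, coeff_zero]
      · obtain ⟨Q, hQ⟩ := hABdvd
        have hQne : Q ≠ 0 := by rintro rfl; rw [mul_zero] at hQ; exact hAB hQ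
        have hBne : B ≠ 0 := fun h => hAB (by rw [h, mul_zero])
        have hBdeg : B.natDegree ≤ n - 1 := by
          have h1 := degree_modByMonic_lt (f * w) hM
          rw [hdegM] at h1
          have := (natDegree_lt_iff_degree_lt hBne).mpr h1
          omega
        have hMne : (X ^ n - 1 : F[X]) ≠ 0 := hM.ne_zero
        have hdegQ : Q.natDegree ≤ n - 2 := by
          have h1 : (A * B).natDegree ≤ (n - 1) + (n - 1) :=
            le_trans natDegree_mul_le (add_le_add hAdeg hBdeg)
          have h2 : (A * B).natDegree = n + Q.natDegree := by
            rw [hQ, natDegree_mul hMne hQne]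
            congr 1
            simpa using (natDegree_X_pow_sub_C (n := n) (r := (1 : F)))
          omega
        rw [hQ, sub_mul, one_mul, coeff_sub, X_pow_mul, coeff_mul_X_pow',
          if_neg (by omega), coeff_eq_zero_of_natDegree_lt (by omega)]
        simp
    calc ∑ i : Fin n, v i * B.coeff i
        = ∑ i ∈ Finset.range n, A.coeff (n - 1 - i) * B.coeff i := by
          rw [← Fin.sum_univ_eq_sum_range]
      _ = ∑ i ∈ Finset.range n, A.coeff i * B.coeff (n - 1 - i) := by
          rw [← Finset.sum_range_reflect (fun i => A.coeff i * B.coeff (n - 1 - i)) n]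
          apply Finset.sum_congr rfl
          intro i hi
          rw [Finset.mem_range] at hi
          show A.coeff (n - 1 - i) * B.coeff i = A.coeff (n - 1 - i) * B.coeff (n - 1 - (n - 1 - i))
          rw [show n - 1 - (n - 1 - i) = i from by omega]
      _ = (A * B).coeff (n - 1) := by
          rw [coeff_mul, Finset.Nat.sum_antidiagonal_eq_sum_range_succ_mk,
            show Finset.range (n - 1 + 1) = Finset.range n from by
              rw [Nat.sub_add_cancel hn]]
      _ = 0 := hcoeff
  have hcard : (Finset.univ.filter fun i => v i ≠ 0).card = A.support.card := by
    apply Finset.card_bij (fun (i : Fin n) _ => n - 1 - (i : ℕ))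
    · intro i hi
      rw [Finset.mem_filter] at hi
      exact mem_support_iff.mpr hi.2
    · intro i₁ h₁ i₂ h₂ he
      have := i₁.isLt
      have := i₂.isLt
      exact Fin.ext (by omega)
    · intro j hj
      have hjle := hsupA j hj
      refine ⟨⟨n - 1 - j, by omega⟩, Finset.mem_filter.mpr ⟨Finset.mem_univ _, ?_⟩, ?_⟩
      · show A.coeff (n - 1 - (n - 1 - j)) ≠ 0
        rw [show n - 1 - (n - 1 - j) = j from by omega]
        exact mem_support_iff.mp hj
      · show n - 1 - (n - 1 - j) = j
        omega
  exact hcard ▸ hdual v hvne horth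

lemma primal_bound {n : ℕ} (hn2 : 2 ≤ n) (f : Polynomial F) (d₁ : ℕ)
    (hC : ∀ u : Polynomial F,
      (fun i : Fin n => ((f * u) %ₘ (X ^ n - 1)).coeff i) ≠ 0 →
      d₁ ≤ (Finset.univ.filter fun i : Fin n =>
              ((f * u) %ₘ (X ^ n - 1)).coeff i ≠ 0).card)
    (p : Polynomial F) (hnz : (f * p) %ₘ (X ^ n - 1) ≠ 0) :
    d₁ ≤ ((f * p) %ₘ (X ^ n - 1)).support.card := by
  have hn : 0 < n := by omega
  have hM : (X ^ n - 1 : F[X]).Monic := by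
    simpa using monic_X_pow_sub_C (1 : F) hn.ne'
  have hdegM : (X ^ n - 1 : F[X]).degree = n := by
    simpa using degree_X_pow_sub_C hn (1 : F)
  set A := (f * p) %ₘ (X ^ n - 1) with hA
  have hAdeg : A.natDegree < n := by
    have h1 := degree_modByMonic_lt (f * p) hM
    rw [hdegM] at h1
    exact (natDegree_lt_iff_degree_lt hnz).mpr h1
  have hfn : (fun i : Fin n => A.coeff i) ≠ 0 := by
    intro hc
    have hmem := natDegree_mem_support_of_nonzero hnz
    have := congrFun hc ⟨A.natDegree, hAdeg⟩
    exact mem_support_iff.mp hmem this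
  have hcard : (Finset.univ.filter fun i : Fin n => A.coeff i ≠ 0).card
      = A.support.card := by
    apply Finset.card_bij (fun (i : Fin n) _ => (i : ℕ))
    · intro i hi
      exact mem_support_iff.mpr (Finset.mem_filter.mp hi).2
    · intro i₁ h₁ i₂ h₂ he
      exact Fin.ext he
    · intro j hj
      have hjlt : j < n :=
        lt_of_le_of_lt (le_natDegree_of_ne_zero (mem_support_iff.mp hj)) hAdeg
      exact ⟨⟨j, hjlt⟩, Finset.mem_filter.mpr
        ⟨Finset.mem_univ _, mem_support_iff.mp hj⟩, rfl⟩
  exact hcard ▸ hC p hfn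

lemma extract_pow {n : ℕ} (hn : 0 < n) (u : Polynomial F) (hu : u ≠ 0) :
    ∃ s u₀, u₀ ≠ 0 ∧ ¬ ((X ^ n - 1 : Polynomial F) ∣ u₀)
      ∧ u = (X ^ n - 1) ^ s * u₀ := by
  have hMne : (X ^ n - 1 : F[X]) ≠ 0 := by
    have : (X ^ n - 1 : F[X]).Monic := by
      simpa using monic_X_pow_sub_C (1 : F) hn.ne'
    exact this.ne_zero
  have hMdeg : (X ^ n - 1 : F[X]).natDegree = n := by
    simpa using (natDegree_X_pow_sub_C (n := n) (r := (1 : F)))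
  suffices h : ∀ D (u : F[X]), u ≠ 0 → u.natDegree ≤ D →
      ∃ s u₀, u₀ ≠ 0 ∧ ¬ ((X ^ n - 1 : Polynomial F) ∣ u₀)
        ∧ u = (X ^ n - 1) ^ s * u₀ by
    exact h u.natDegree u hu le_rfl
  intro D
  induction D using Nat.strong_induction_on with
  | _ D ih =>
    intro u hu hD
    by_cases hdvd : (X ^ n - 1 : F[X]) ∣ u
    · obtain ⟨c, hc⟩ := hdvd
      have hcne : c ≠ 0 := by rintro rfl; rw [mul_zero] at hc; exact hu hc
      have hdeg : c.natDegree < D := by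
        have h2 := natDegree_mul hMne hcne
        rw [← hc, hMdeg] at h2
        omega
      obtain ⟨s, u₀, h1, h2, h3⟩ := ih c.natDegree hdeg c hcne le_rfl
      exact ⟨s + 1, u₀, h1, h2, by rw [hc, h3]; ring⟩
    · exact ⟨0, u, hu, hdvd, by ring⟩

lemma coprime_M_Xt {n t : ℕ} (hn : 0 < n) :
    IsCoprime (X ^ n - 1 : Polynomial F) (X ^ t) := by
  apply IsCoprime.pow_right
  refine ⟨-1, X ^ (n - 1), ?_⟩
  rw [← pow_succ, Nat.sub_add_cancel hn]
  ring

lemma sub_supp {γ β : F} {P e x y : Polynomial F}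
    (hx : x = P + C γ * e) (hy : y = P - C β * e) :
    P.support \ e.support ⊆ (x.support ∩ y.support) \ e.support := by
  intro i hi
  rw [Finset.mem_sdiff] at hi ⊢
  obtain ⟨hiP, hie⟩ := hi
  have he0 : e.coeff i = 0 := notMem_support_iff.mp hie
  refine ⟨?_, hie⟩
  rw [Finset.mem_inter, mem_support_iff, mem_support_iff, hx, hy, coeff_add, coeff_sub,
    coeff_C_mul, coeff_C_mul, he0]
  simp only [mul_zero, add_zero, sub_zero]
  exact ⟨mem_support_iff.mp hiP, mem_support_iff.mp hiP⟩

lemma endpoints {u g : Polynomial F} {t : ℕ} (hu : u ≠ 0) (hg0 : g.coeff 0 ≠ 0)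
    (ht0 : 0 < t) (htg : t < g.natDegree) :
    2 ≤ ((u * g).support \ (u * X ^ t).support).card := by
  have hgne : g ≠ 0 := fun h => hg0 (by simp [h])
  have hτg : g.natTrailingDegree = 0 := Nat.le_zero.mp (natTrailingDegree_le_of_ne_zero hg0)
  have hugne : u * g ≠ 0 := mul_ne_zero hu hgne
  have hτ : (u * g).natTrailingDegree = u.natTrailingDegree := by
    rw [natTrailingDegree_mul hu hgne, hτg, add_zero]
  have hD : (u * g).natDegree = u.natDegree + g.natDegree := natDegree_mul hu hgne
  have h1 : u.natTrailingDegree ∈ (u * g).support := by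
    rw [← hτ]; exact natTrailingDegree_mem_support_of_nonzero hugne
  have h2 : u.natDegree + g.natDegree ∈ (u * g).support := by
    rw [← hD]; exact natDegree_mem_support_of_nonzero hugne
  have hbound : ∀ i ∈ (u * X ^ t).support,
      u.natTrailingDegree + t ≤ i ∧ i ≤ u.natDegree + t := by
    intro i hi
    have hXne : (X : Polynomial F) ^ t ≠ 0 := pow_ne_zero _ X_ne_zero
    constructor
    · have := natTrailingDegree_le_of_ne_zero (mem_support_iff.mp hi)
      rwa [natTrailingDegree_mul hu hXne, natTrailingDegree_X_pow] at this
    · have := le_natDegree_of_ne_zero (mem_support_iff.mp hi)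
      rwa [natDegree_mul hu hXne, natDegree_X_pow] at this
  have hτle := u.natTrailingDegree_le_natDegree
  have hin : ({u.natTrailingDegree, u.natDegree + g.natDegree} : Finset ℕ)
      ⊆ (u * g).support \ (u * X ^ t).support := by
    intro i hi
    rw [Finset.mem_insert, Finset.mem_singleton] at hi
    rw [Finset.mem_sdiff]
    rcases hi with rfl | rfl
    · exact ⟨h1, fun hc => by have := hbound _ hc; omega⟩
    · exact ⟨h2, fun hc => by have := hbound _ hc; omega⟩
  calc 2 = ({u.natTrailingDegree, u.natDegree + g.natDegree} : Finset ℕ).card :=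
        (Finset.card_pair (by omega)).symm
    _ ≤ _ := Finset.card_le_card hin

end Aux

theorem stmt_8 (F : Type*) [Field F] [CharP F 2]
    (m : ℕ) (hm0 : 0 < m) (hmodd : Odd m)
    (n k : ℕ) (hk : 1 ≤ k) (hkn : k < n)
    (f : Polynomial F) (hdeg : f.natDegree = n - k)
    (hβ0 : f.coeff 0 ≠ 0) (hβr : f.coeff (n - k) ≠ 0)
    (hdvd : f ∣ X ^ n - 1)
    (d₁ d₂ : ℕ)
    (hC : ∀ u : Polynomial F,
      (fun i : Fin n => ((f * u) %ₘ (X ^ n - 1)).coeff i) ≠ 0 →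
      d₁ ≤ (Finset.univ.filter fun i : Fin n =>
              ((f * u) %ₘ (X ^ n - 1)).coeff i ≠ 0).card)
    (hdual : ∀ v : Fin n → F, v ≠ 0 →
      (∀ u : Polynomial F,
        ∑ i : Fin n, v i * ((f * u) %ₘ (X ^ n - 1)).coeff i = 0) →
      d₂ ≤ (Finset.univ.filter fun i => v i ≠ 0).card)
    (t : ℕ) (ht0 : 0 < t) (htr : t < n - k)
    (u : Polynomial F) (hu : u ≠ 0) :
    m * min d₁ d₂ + 2 * m ≤
      m * (u * (f - C (f.coeff t) * X ^ t + X ^ t)).support.card +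
      m * (u * (f - C (f.coeff t) * X ^ t)).support.card := by
  have hn : 0 < n := by omega
  have hn2 : 2 ≤ n := by omega
  set r := n - k with hr
  have hr1 : 1 ≤ r := by omega
  set β := f.coeff t with hβ
  set g1 : Polynomial F := f - C β * X ^ t + X ^ t with hg1
  set g2 : Polynomial F := f - C β * X ^ t with hg2
  have hM : (X ^ n - 1 : Polynomial F).Monic := by
    simpa using monic_X_pow_sub_C (1 : F) hn.ne'
  -- characteristic two
  have h2 : (2 : Polynomial F) = 0 := by
    have h2F : (2 : F) = 0 := by
      have := CharP.cast_eq_zero F 2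
      exact_mod_cast this
    calc (2 : Polynomial F) = C (2 : F) := (map_ofNat C 2).symm
      _ = 0 := by rw [h2F, map_zero]
  -- facts about f, g1, g2
  have hf0 : f ≠ 0 := fun h => hβ0 (by rw [h, coeff_zero])
  have htne : (0 : ℕ) ≠ t := by omega
  have hrt : r ≠ t := by omega
  have hg1c0 : g1.coeff 0 = f.coeff 0 := by
    rw [hg1, coeff_add, coeff_sub, coeff_C_mul, coeff_X_pow, if_neg htne, mul_zero,
      sub_zero, add_zero]
  have hg2c0 : g2.coeff 0 = f.coeff 0 := by
    rw [hg2, coeff_sub, coeff_C_mul, coeff_X_pow, if_neg htne, mul_zero, sub_zero]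
  have hg1cr : g1.coeff r ≠ 0 := by
    rw [hg1, coeff_add, coeff_sub, coeff_C_mul, coeff_X_pow, if_neg hrt, mul_zero,
      sub_zero, add_zero]
    exact hβr
  have hg2cr : g2.coeff r ≠ 0 := by
    rw [hg2, coeff_sub, coeff_C_mul, coeff_X_pow, if_neg hrt, mul_zero, sub_zero]
    exact hβr
  have hg1deg : t < g1.natDegree := lt_of_lt_of_le htr (le_natDegree_of_ne_zero hg1cr)
  have hg2deg : t < g2.natDegree := lt_of_lt_of_le htr (le_natDegree_of_ne_zero hg2cr)
  have hfdeg : t < f.natDegree := by rw [hdeg]; exact htr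
  -- generic char-2 identity
  have hxy0 : ∀ w : Polynomial F, w * g1 + w * g2 = w * X ^ t := by
    intro w
    rw [hg1, hg2]
    linear_combination (w * (f - C β * X ^ t)) * h2
  have hxid0 : ∀ w : Polynomial F, w * g1 = w * f + C (1 - β) * (w * X ^ t) := by
    intro w
    rw [hg1, map_sub, C_1]
    ring
  have hyid0 : ∀ w : Polynomial F, w * g2 = w * f - C β * (w * X ^ t) := by
    intro w
    rw [hg2]
    ring
  -- reduce to the +2 bound on the two weights
  suffices key : min d₁ d₂ + 2 ≤ (u * g1).support.card + (u * g2).support.card by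
    calc m * min d₁ d₂ + 2 * m = m * (min d₁ d₂ + 2) := by ring
      _ ≤ m * ((u * g1).support.card + (u * g2).support.card) := Nat.mul_le_mul_left m key
      _ = m * (u * g1).support.card + m * (u * g2).support.card := by ring
  set d := min d₁ d₂ with hd
  -- both weights are at least two
  have two1 : 2 ≤ (u * g1).support.card :=
    le_trans (endpoints hu (hg1c0 ▸ hβ0) ht0 hg1deg)
      (Finset.card_le_card Finset.sdiff_subset)
  have two2 : 2 ≤ (u * g2).support.card :=
    le_trans (endpoints hu (hg2c0 ▸ hβ0) ht0 hg2deg)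
      (Finset.card_le_card Finset.sdiff_subset)
  by_cases hdsmall : d ≤ 2
  · omega
  push_neg at hdsmall
  obtain ⟨s, u₀, hu₀ne, hu₀nd, hus⟩ := extract_pow hn u hu
  by_cases hs : s = 0
  · -- unfolded case : `X^n - 1` does not divide `u`
    subst hs
    rw [pow_zero, one_mul] at hus
    subst hus
    have hkey := pair_bound (u * g1) (u * g2)
    rw [hxy0 u] at hkey
    have hsub := sub_supp (P := u * f) (e := u * X ^ t) (hxid0 u) (hyid0 u)
    have hDbig : ((u * f).support \ (u * X ^ t).support).card
        ≤ (((u * g1).support ∩ (u * g2).support) \ (u * X ^ t).support).card :=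
      Finset.card_le_card hsub
    have hend : 2 ≤ ((u * f).support \ (u * X ^ t).support).card :=
      endpoints hu (hβ0) ht0 hfdeg
    have hsdiff : (u * f).support.card - (u * X ^ t).support.card
        ≤ ((u * f).support \ (u * X ^ t).support).card := Finset.le_card_sdiff _ _
    by_cases hP : (f * u) %ₘ (X ^ n - 1) = 0
    · -- dual case
      have hMdvd : (X ^ n - 1 : Polynomial F) ∣ f * u := (modByMonic_eq_zero_iff_dvd hM).mp hP
      have he1 : (u * X ^ t) %ₘ (X ^ n - 1) ≠ 0 := by
        intro h0
        have hdd : (X ^ n - 1 : Polynomial F) ∣ u * X ^ t :=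
          (modByMonic_eq_zero_iff_dvd hM).mp h0
        exact hu₀nd ((coprime_M_Xt hn).dvd_of_dvd_mul_right hdd)
      have hd2 : d₂ ≤ ((u * X ^ t) %ₘ (X ^ n - 1)).support.card := by
        apply dual_bound hn2 f d₂ hdual (u * X ^ t) _ he1
        have hcomm : f * (u * X ^ t) = (f * u) * X ^ t := by ring
        rw [hcomm]
        exact hMdvd.mul_right _
      have hE : d₂ ≤ (u * X ^ t).support.card :=
        le_trans hd2 (fold_card_le hn _)
      have : d ≤ d₂ := min_le_right _ _
      omega
    · -- primal case
      have hd1 : d₁ ≤ ((f * u) %ₘ (X ^ n - 1)).support.card := primal_bound hn2 f d₁ hC u hP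
      have hP1 : d₁ ≤ (u * f).support.card := by
        have := fold_card_le hn (f * u)
        rw [mul_comm u f]
        omega
      have : d ≤ d₁ := min_le_left _ _
      omega
  · -- folded case : s ≥ 1
    have hs1 : 1 ≤ s := by omega
    have ha : 2 * ((u₀ * g1) %ₘ (X ^ n - 1)).support.card ≤ (u * g1).support.card := by
      rw [hus, show ((X ^ n - 1 : Polynomial F) ^ s * u₀) * g1
        = (X ^ n - 1) ^ s * (u₀ * g1) from by ring]
      exact pow_mul_weight hn hs1 _
    have hb : 2 * ((u₀ * g2) %ₘ (X ^ n - 1)).support.card ≤ (u * g2).support.card := by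
      rw [hus, show ((X ^ n - 1 : Polynomial F) ^ s * u₀) * g2
        = (X ^ n - 1) ^ s * (u₀ * g2) from by ring]
      exact pow_mul_weight hn hs1 _
    -- the folded claim
    set P := (u₀ * f) %ₘ (X ^ n - 1) with hP
    set e := (u₀ * X ^ t) %ₘ (X ^ n - 1) with he
    set x := (u₀ * g1) %ₘ (X ^ n - 1) with hx
    set y := (u₀ * g2) %ₘ (X ^ n - 1) with hy
    have hxid : x = P + C (1 - β) * e := by
      rw [hx, hP, he, hxid0 u₀, add_modByMonic, ← smul_eq_C_mul, ← smul_eq_C_mul,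
        smul_modByMonic]
    have hyid : y = P - C β * e := by
      rw [hy, hP, he, hyid0 u₀, sub_modByMonic, ← smul_eq_C_mul, ← smul_eq_C_mul,
        smul_modByMonic]
    have hxye : x + y = e := by
      rw [hx, hy, he, ← add_modByMonic, hxy0 u₀]
    have hfold : d ≤ x.support.card + y.support.card := by
      by_cases hP0 : P = 0
      · -- dual case
        have hMdvd : (X ^ n - 1 : Polynomial F) ∣ f * u₀ := by
          rw [mul_comm f u₀]
          exact (modByMonic_eq_zero_iff_dvd hM).mp (hP ▸ hP0)
        have he1 : e ≠ 0 := by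
          intro h0
          have hdd : (X ^ n - 1 : Polynomial F) ∣ u₀ * X ^ t :=
            (modByMonic_eq_zero_iff_dvd hM).mp (he ▸ h0)
          exact hu₀nd ((coprime_M_Xt hn).dvd_of_dvd_mul_right hdd)
        have hd2 : d₂ ≤ e.support.card := by
          apply dual_bound hn2 f d₂ hdual (u₀ * X ^ t) _ he1
          have : f * (u₀ * X ^ t) = (f * u₀) * X ^ t := by ring
          rw [this]
          exact hMdvd.mul_right _
        have hsube : e.support ⊆ x.support ∪ y.support := hxye ▸ support_add
        have := Finset.card_le_card hsube
        have := Finset.card_union_le x.support y.support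
        have : d ≤ d₂ := min_le_right _ _
        omega
      · -- primal case
        have hd1 : d₁ ≤ P.support.card := by
          have hnz : (f * u₀) %ₘ (X ^ n - 1) ≠ 0 := by
            intro hzero
            apply hP0
            rw [hP, mul_comm u₀ f, hzero]
          have hpb := primal_bound hn2 f d₁ hC u₀ hnz
          rwa [hP, mul_comm u₀ f]
        have hkey := pair_bound x y
        rw [hxye] at hkey
        have hsub := sub_supp (P := P) (e := e) hxid hyid
        have hDbig : (P.support \ e.support).card
            ≤ ((x.support ∩ y.support) \ e.support).card := Finset.card_le_card hsub
        have hsdiff : P.support.card - e.support.card ≤ (P.support \ e.support).card :=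
          Finset.le_card_sdiff _ _
        have : d ≤ d₁ := min_le_left _ _
        omega
    omega
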